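/- For c > 0, ν > 0, μ > 0, γ > 0, and p > c, the Laplace transform of t ↦ t^(μ−1) E^γ_{ν,μ}(−c^ν t^ν) equals p^(νγ−μ)/(p^ν + c^ν)^γ, i.e. 1/(p^(μ−νγ)(p^ν+c^ν)^γ) times p^0 appropriately. -/

import Mathlib

open MeasureTheory Real Set Filter


lemma my_gamma_poch (γ : ℝ) (hγ : 0 < γ) (k : ℕ) :
    Real.Gamma (γ + k) = (ascPochhammer ℝ k).eval γ * Real.Gamma γ := by
  induction k with
  | zero => simp
  | succ n ih =>
    have h1 : γ + ((n+1 : ℕ) : ℝ) = (γ + n) + 1 := by push_cast; ring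
    have h2 : (0:ℝ) < γ + n := by positivity
    rw [h1, Real.Gamma_add_one h2.ne', ih, ascPochhammer_succ_eval]
    ring

lemma my_int (a r : ℝ) (ha : 0 < a) (hr : 0 < r) :
    IntegrableOn (fun t : ℝ ↦ t ^ (a - 1) * Real.exp (-(r * t))) (Ioi 0) := by
  have := integrableOn_rpow_mul_exp_neg_mul_rpow (p := 1) (s := a - 1) (b := r)
    (by linarith) one_pos hr
  simpa [Real.rpow_one, neg_mul] using this

lemma my_summable (γ y : ℝ) (hγ : 0 < γ) (hy0 : 0 ≤ y) (hy : y < 1) :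
    Summable (fun k : ℕ ↦ (ascPochhammer ℝ k).eval γ * y ^ k / k.factorial) := by
  rcases eq_or_lt_of_le hy0 with h0 | h0
  · refine summable_of_ne_finset_zero (s := {0}) fun k hk ↦ ?_
    have hk' : k ≠ 0 := by simpa using hk
    simp [← h0, zero_pow hk']
  · have hpos : ∀ k : ℕ, 0 < (ascPochhammer ℝ k).eval γ * y ^ k / k.factorial := by
      intro k
      have h1 := ascPochhammer_pos k γ hγ
      have h2 : (0:ℝ) < k.factorial := by exact_mod_cast k.factorial_pos
      positivity
    refine summable_of_ratio_test_tendsto_lt_one hy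
      (Filter.Eventually.of_forall fun k ↦ (hpos k).ne') ?_
    have hkey : ∀ k : ℕ, ‖(ascPochhammer ℝ (k+1)).eval γ * y ^ (k+1) / (k+1).factorial‖ /
        ‖(ascPochhammer ℝ k).eval γ * y ^ k / k.factorial‖ = (1 + (γ-1)/((k:ℝ)+1)) * y := by
      intro k
      have p1 : 0 < (ascPochhammer ℝ k).eval γ := ascPochhammer_pos k γ hγ
      have hf : (((k+1).factorial : ℕ) : ℝ) = ((k:ℝ)+1) * k.factorial := by
        rw [Nat.factorial_succ]; push_cast; ring
      have hfk : (0:ℝ) < (k.factorial : ℝ) := by exact_mod_cast k.factorial_pos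
      rw [Real.norm_eq_abs, Real.norm_eq_abs, abs_of_pos (hpos (k+1)), abs_of_pos (hpos k),
        ascPochhammer_succ_eval, hf]
      have hk1 : ((k:ℝ)+1) ≠ 0 := by positivity
      field_simp
      ring
    have hden : Tendsto (fun k : ℕ ↦ (k:ℝ) + 1) atTop atTop :=
      tendsto_atTop_add_const_right _ 1 tendsto_natCast_atTop_atTop
    have h2 : Tendsto (fun k : ℕ ↦ (γ-1)/((k:ℝ)+1)) atTop (nhds 0) :=
      Filter.Tendsto.div_atTop tendsto_const_nhds hden
    have h3 : Tendsto (fun k : ℕ ↦ (1 + (γ-1)/((k:ℝ)+1)) * y) atTop (nhds ((1+0)*y)) :=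
      (tendsto_const_nhds.add h2).mul tendsto_const_nhds
    rw [show (fun n : ℕ ↦ ‖(ascPochhammer ℝ (n+1)).eval γ * y ^ (n+1) / (n+1).factorial‖ /
        ‖(ascPochhammer ℝ n).eval γ * y ^ n / n.factorial‖)
        = fun k : ℕ ↦ (1 + (γ-1)/((k:ℝ)+1)) * y from funext hkey]
    simpa using h3

lemma my_binom (γ y : ℝ) (hγ : 0 < γ) (hy0 : 0 ≤ y) (hy : y < 1) :
    ∑' k : ℕ, (ascPochhammer ℝ k).eval γ * (-y) ^ k / k.factorial = (1 + y) ^ (-γ) := by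
  set F : ℕ → ℝ → ℝ := fun k t ↦ (-y) ^ k / k.factorial *
    (t ^ (γ + k - 1) * Real.exp (-(1 * t))) with hF
  have hak : ∀ k : ℕ, (0:ℝ) < γ + k := fun k ↦ by positivity
  have hint : ∀ k, Integrable (F k) (volume.restrict (Ioi 0)) := fun k ↦
    ((my_int (γ + k) 1 (hak k) one_pos).const_mul _)
  have hnorm : ∀ k, (∫ t in Ioi (0:ℝ), ‖F k t‖)
      = y ^ k / k.factorial * ((1/1 : ℝ) ^ (γ + k) * Real.Gamma (γ + k)) := by
    intro k
    rw [show (∫ t in Ioi (0:ℝ), ‖F k t‖)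
        = ∫ t in Ioi (0:ℝ), y ^ k / k.factorial * (t ^ (γ + k - 1) * Real.exp (-(1 * t))) from
      setIntegral_congr_fun measurableSet_Ioi (fun t ht ↦ by
        have ht' : (0:ℝ) < t := ht
        rw [hF]
        rw [Real.norm_eq_abs, abs_mul, abs_div, abs_pow, abs_neg, abs_of_nonneg hy0,
          abs_of_nonneg (Nat.cast_nonneg _),
          abs_of_pos (mul_pos (Real.rpow_pos_of_pos ht' _) (Real.exp_pos _))]),
      integral_const_mul, Real.integral_rpow_mul_exp_neg_mul_Ioi (hak k) one_pos]
  have hsum : Summable (fun k ↦ ∫ t in Ioi (0:ℝ), ‖F k t‖) := by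
    refine ((my_summable γ y hγ hy0 hy).mul_left (Real.Gamma γ)).congr fun k ↦ ?_
    rw [hnorm k, my_gamma_poch γ hγ k]
    simp only [one_div, inv_one, Real.one_rpow, one_mul]
    ring
  have key := integral_tsum_of_summable_integral_norm hint hsum
  have hterm : ∀ k, (∫ t in Ioi (0:ℝ), F k t)
      = Real.Gamma γ * ((ascPochhammer ℝ k).eval γ * (-y) ^ k / k.factorial) := by
    intro k
    rw [hF]
    rw [integral_const_mul, Real.integral_rpow_mul_exp_neg_mul_Ioi (hak k) one_pos,
      my_gamma_poch γ hγ k]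
    simp only [one_div, inv_one, Real.one_rpow, one_mul]
    ring
  have hptw : ∀ t ∈ Ioi (0:ℝ), (∑' k, F k t) = t ^ (γ - 1) * Real.exp (-((1 + y) * t)) := by
    intro t ht
    have ht' : (0:ℝ) < t := ht
    have e1 : ∀ k : ℕ, F k t
        = t ^ (γ - 1) * Real.exp (-t) * ((-y * t) ^ k / k.factorial) := by
      intro k
      have e2 : t ^ (γ + (k:ℝ) - 1) = t ^ (γ - 1) * t ^ k := by
        rw [← Real.rpow_natCast t k, ← Real.rpow_add ht']
        congr 1
        ring
      rw [hF]
      simp only [one_mul]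
      rw [e2, mul_pow]
      ring
    rw [tsum_congr e1, tsum_mul_left]
    have e3 : (∑' k : ℕ, ((-y * t) ^ k / (k.factorial : ℝ))) = Real.exp (-y * t) := by
      rw [Real.exp_eq_exp_ℝ, NormedSpace.exp_eq_tsum_div]
    rw [e3, mul_assoc, ← Real.exp_add]
    congr 2
    ring
  have hres : (∫ t in Ioi (0:ℝ), ∑' k, F k t)
      = (1/(1+y)) ^ γ * Real.Gamma γ := by
    rw [setIntegral_congr_fun measurableSet_Ioi hptw]
    have h1y : (0:ℝ) < 1 + y := by linarith
    exact Real.integral_rpow_mul_exp_neg_mul_Ioi hγ h1y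
  rw [tsum_congr hterm, tsum_mul_left, hres] at key
  have hΓ : Real.Gamma γ ≠ 0 := (Real.Gamma_pos_of_pos hγ).ne'
  have h1y : (0:ℝ) < 1 + y := by linarith
  have : (∑' k : ℕ, (ascPochhammer ℝ k).eval γ * (-y) ^ k / k.factorial) = (1/(1+y)) ^ γ := by
    exact mul_left_cancel₀ hΓ (key.trans (mul_comm _ _))
  rw [this, one_div, ← Real.rpow_neg_one (1+y), ← Real.rpow_mul h1y.le]
  norm_num

theorem prabhakar_laplace_transform
    (c ν μ γ p : ℝ) (hc : 0 < c) (hν : 0 < ν) (hμ : 0 < μ) (hγ : 0 < γ) (hp : c < p) :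
    ∫ t in Ioi (0 : ℝ),
        Real.exp (-p * t) *
          (t ^ (μ - 1) * ∑' k : ℕ,
            (ascPochhammer ℝ k).eval γ * (-(c ^ ν * t ^ ν)) ^ k /
              (k.factorial * Real.Gamma (μ + k * ν)))
      = p ^ (ν * γ - μ) / (p ^ ν + c ^ ν) ^ γ := by
  have hp0 : 0 < p := hc.trans hp
  set y : ℝ := (c / p) ^ ν with hy
  have hy0 : 0 ≤ y := Real.rpow_nonneg (by positivity) _
  have hy1 : y < 1 := Real.rpow_lt_one (by positivity) ((div_lt_one hp0).mpr hp) hν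
  set G : ℕ → ℝ → ℝ := fun k t ↦ Real.exp (-p * t) * (t ^ (μ - 1) *
    ((ascPochhammer ℝ k).eval γ * (-(c ^ ν * t ^ ν)) ^ k /
      (k.factorial * Real.Gamma (μ + k * ν)))) with hG
  set C : ℕ → ℝ := fun k ↦ (ascPochhammer ℝ k).eval γ * (-(c ^ ν)) ^ k /
      (k.factorial * Real.Gamma (μ + k * ν)) with hC
  have ha : ∀ k : ℕ, (0:ℝ) < μ + k * ν := fun k ↦ by positivity
  have hGt : ∀ k : ℕ, ∀ t ∈ Ioi (0:ℝ),
      G k t = C k * (t ^ (μ + k * ν - 1) * Real.exp (-(p * t))) := by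
    intro k t ht
    have ht' : (0:ℝ) < t := ht
    have e1 : (-(c ^ ν * t ^ ν)) = (-(c ^ ν)) * t ^ ν := by ring
    have e2 : (t ^ ν) ^ k = t ^ (ν * (k:ℝ)) := by
      rw [Real.rpow_mul ht'.le, Real.rpow_natCast]
    have e3 : t ^ (μ + (k:ℝ) * ν - 1) = t ^ (μ - 1) * t ^ (ν * (k:ℝ)) := by
      rw [← Real.rpow_add ht']
      congr 1
      ring
    rw [hG, hC]
    simp only []
    rw [e1, mul_pow, e2, e3, neg_mul]
    ring
  have hint : ∀ k, Integrable (G k) (volume.restrict (Ioi 0)) := fun k ↦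
    MeasureTheory.IntegrableOn.congr_fun ((my_int (μ + k * ν) p (ha k) hp0).const_mul (C k))
      (fun t ht ↦ (hGt k t ht).symm) measurableSet_Ioi
  have hfact : ∀ k : ℕ, (0:ℝ) < (k.factorial : ℝ) := fun k ↦ by exact_mod_cast k.factorial_pos
  have hCabs : ∀ k : ℕ, |C k| = (ascPochhammer ℝ k).eval γ * (c ^ ν) ^ k /
      (k.factorial * Real.Gamma (μ + k * ν)) := by
    intro k
    rw [hC]
    simp only []
    rw [abs_div, abs_mul, abs_pow, abs_neg, abs_of_nonneg (Real.rpow_nonneg hc.le _),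
      abs_of_pos (ascPochhammer_pos _ _ hγ),
      abs_of_pos (mul_pos (hfact k) (Real.Gamma_pos_of_pos (ha k)))]
  have hnormval : ∀ k : ℕ, (∫ t in Ioi (0:ℝ), ‖G k t‖)
      = |C k| * ((1/p) ^ (μ + k * ν) * Real.Gamma (μ + k * ν)) := by
    intro k
    rw [show (∫ t in Ioi (0:ℝ), ‖G k t‖)
        = ∫ t in Ioi (0:ℝ), |C k| * (t ^ (μ + k * ν - 1) * Real.exp (-(p * t))) from
      setIntegral_congr_fun measurableSet_Ioi (fun t ht ↦ by
        have ht' : (0:ℝ) < t := ht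
        rw [hGt k t ht, Real.norm_eq_abs, abs_mul,
          abs_of_pos (mul_pos (Real.rpow_pos_of_pos ht' _) (Real.exp_pos _))]),
      integral_const_mul, Real.integral_rpow_mul_exp_neg_mul_Ioi (ha k) hp0]
  have hyk : ∀ k : ℕ, (c ^ ν) ^ k * (1/p) ^ (μ + (k:ℝ) * ν) = (1/p) ^ μ * y ^ k := by
    intro k
    have hp1 : (0:ℝ) < 1/p := by positivity
    have h1 : (c ^ ν) ^ k = c ^ (ν * (k:ℝ)) := by
      rw [Real.rpow_mul hc.le, Real.rpow_natCast]
    have h2 : y ^ k = (c/p) ^ (ν * (k:ℝ)) := by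
      rw [hy, Real.rpow_mul (by positivity : (0:ℝ) ≤ c/p), Real.rpow_natCast]
    have h3 : (1/p) ^ (μ + (k:ℝ) * ν) = (1/p) ^ μ * (1/p) ^ (ν * (k:ℝ)) := by
      rw [← Real.rpow_add hp1]
      congr 1
      ring
    rw [h1, h2, h3, ← mul_assoc, mul_comm (c ^ (ν * (k:ℝ))) ((1/p) ^ μ), mul_assoc,
      ← Real.mul_rpow hc.le hp1.le, mul_one_div]
  have hsum : Summable (fun k ↦ ∫ t in Ioi (0:ℝ), ‖G k t‖) := by
    refine ((my_summable γ y hγ hy0 hy1).mul_left ((1/p) ^ μ)).congr fun k ↦ ?_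
    rw [hnormval k, hCabs k]
    have hΓ : Real.Gamma (μ + k * ν) ≠ 0 := (Real.Gamma_pos_of_pos (ha k)).ne'
    field_simp
    linear_combination (-(ascPochhammer ℝ k).eval γ) * (hyk k)
  have key := integral_tsum_of_summable_integral_norm hint hsum
  have hterm : ∀ k : ℕ, (∫ t in Ioi (0:ℝ), G k t)
      = (1/p) ^ μ * ((ascPochhammer ℝ k).eval γ * (-y) ^ k / k.factorial) := by
    intro k
    rw [setIntegral_congr_fun measurableSet_Ioi (hGt k), integral_const_mul,
      Real.integral_rpow_mul_exp_neg_mul_Ioi (ha k) hp0, hC]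
    simp only []
    have hΓ : Real.Gamma (μ + k * ν) ≠ 0 := (Real.Gamma_pos_of_pos (ha k)).ne'
    have e : (-(c ^ ν)) ^ k * (1/p) ^ (μ + (k:ℝ) * ν) = (1/p) ^ μ * (-y) ^ k := by
      rw [neg_pow, neg_pow y, mul_comm ((-1:ℝ) ^ k) ((c ^ ν) ^ k), mul_assoc, mul_comm ((-1:ℝ)^k),
        ← mul_assoc, hyk k]
      ring
    field_simp
    linear_combination ((ascPochhammer ℝ k).eval γ) * e
  have hlhs : (∫ t in Ioi (0:ℝ),
        Real.exp (-p * t) * (t ^ (μ - 1) * ∑' k : ℕ,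
          (ascPochhammer ℝ k).eval γ * (-(c ^ ν * t ^ ν)) ^ k /
            (k.factorial * Real.Gamma (μ + k * ν))))
      = ∫ t in Ioi (0:ℝ), ∑' k, G k t := by
    refine setIntegral_congr_fun measurableSet_Ioi (fun t ht ↦ ?_)
    rw [hG]
    simp only []
    rw [tsum_mul_left, tsum_mul_left]
  rw [hlhs, ← key, tsum_congr hterm, tsum_mul_left, my_binom γ y hγ hy0 hy1]
  -- final algebra
  have hpν : (0:ℝ) < p ^ ν := Real.rpow_pos_of_pos hp0 ν
  have hcν : (0:ℝ) < c ^ ν := Real.rpow_pos_of_pos hc ν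
  have hs : (0:ℝ) < p ^ ν + c ^ ν := by positivity
  have e1 : (1:ℝ) + y = (p ^ ν + c ^ ν) / p ^ ν := by
    rw [hy, Real.div_rpow hc.le hp0.le]
    field_simp
  rw [e1, one_div, ← Real.rpow_neg_one p, ← Real.rpow_mul hp0.le,
    Real.div_rpow hs.le hpν.le, Real.rpow_neg hs.le, Real.rpow_neg hpν.le,
    ← Real.rpow_mul hp0.le]
  rw [inv_div_inv, ← mul_div_assoc, ← Real.rpow_add hp0,
    show -1 * μ + ν * γ = ν * γ - μ by ring]
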